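/- If Sᵢᵀ Mᵢ Sᵢ = I and Sᵢᵀ Lᵢ Sᵢ = Λᵢ with all diagonal entries of Λ₁ ⊗ I + I ⊗ Λ₀ nonzero, then A = L₁ ⊗ M₀ + M₁ ⊗ L₀ is invertible with A⁻¹ = (S₁ ⊗ S₀)(Λ₁ ⊗ I + I ⊗ Λ₀)⁻¹(S₁ ⊗ S₀)ᵀ. -/

import Mathlib

open Kronecker

/-- Fast diagonalization gives the inverse of the Kronecker sum. -/
theorem fast_diag_inverse_2d {n₀ n₁ : ℕ}
    (L₀ M₀ S₀ Λ₀ : Matrix (Fin n₀) (Fin n₀) ℝ)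
    (L₁ M₁ S₁ Λ₁ : Matrix (Fin n₁) (Fin n₁) ℝ)
    (hΛ₀ : Λ₀.IsDiag) (hΛ₁ : Λ₁.IsDiag)
    (hM₀ : S₀.transpose * M₀ * S₀ = 1) (hM₁ : S₁.transpose * M₁ * S₁ = 1)
    (hL₀ : S₀.transpose * L₀ * S₀ = Λ₀) (hL₁ : S₁.transpose * L₁ * S₁ = Λ₁)
    (hnz : ∀ (j : Fin n₁) (k : Fin n₀), Λ₁ j j + Λ₀ k k ≠ 0) :
    let A := L₁ ⊗ₖ M₀ + M₁ ⊗ₖ L₀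
    let D := Λ₁ ⊗ₖ (1 : Matrix (Fin n₀) (Fin n₀) ℝ) + (1 : Matrix (Fin n₁) (Fin n₁) ℝ) ⊗ₖ Λ₀
    let B := (S₁ ⊗ₖ S₀) * D⁻¹ * (S₁ ⊗ₖ S₀).transpose
    A * B = 1 ∧ B * A = 1 := by
  intro A D B
  set T : Matrix (Fin n₁ × Fin n₀) (Fin n₁ × Fin n₀) ℝ := S₁ ⊗ₖ S₀ with hT
  -- S₀, S₁ invertible
  have hdS₀ : IsUnit S₀.det := by
    have h : S₀.det * (M₀.det * S₀.det) = 1 := by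
      have := congrArg Matrix.det hM₀
      simpa [Matrix.det_mul, Matrix.det_transpose, mul_comm, mul_assoc, mul_left_comm] using this
    exact IsUnit.of_mul_eq_one _ h
  have hdS₁ : IsUnit S₁.det := by
    have h : S₁.det * (M₁.det * S₁.det) = 1 := by
      have := congrArg Matrix.det hM₁
      simpa [Matrix.det_mul, Matrix.det_transpose, mul_comm, mul_assoc, mul_left_comm] using this
    exact IsUnit.of_mul_eq_one _ h
  have hdT : IsUnit T.det := by
    rw [hT, Matrix.det_kronecker]
    exact (hdS₁.pow _).mul (hdS₀.pow _)
  -- D is diagonal with nonzero entries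
  have hD : D = Matrix.diagonal (fun p : Fin n₁ × Fin n₀ => Λ₁ p.1 p.1 + Λ₀ p.2 p.2) := by
    ext ⟨j, k⟩ ⟨j', k'⟩
    simp only [D, Matrix.add_apply, Matrix.kroneckerMap_apply, Matrix.diagonal_apply]
    by_cases h : (j, k) = (j', k')
    · obtain ⟨h1, h2⟩ := Prod.mk.injEq .. ▸ h
      subst h1; subst h2
      simp [h]
    · rw [if_neg h]
      rcases (not_and_or.mp (fun hc => h (Prod.ext hc.1 hc.2))) with hj | hk
      · rw [hΛ₁ hj, Matrix.one_apply_ne hj]; ring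
      · rw [hΛ₀ hk, Matrix.one_apply_ne hk]; ring
  have hdD : IsUnit D.det := by
    rw [hD, Matrix.det_diagonal]
    exact isUnit_iff_ne_zero.mpr (Finset.prod_ne_zero_iff.mpr fun ⟨j, k⟩ _ => hnz j k)
  -- key diagonalization identity
  have hkey : T.transpose * A * T = D := by
    rw [hT, ← Matrix.kroneckerMap_transpose]
    show (S₁.transpose ⊗ₖ S₀.transpose) * (L₁ ⊗ₖ M₀ + M₁ ⊗ₖ L₀) * (S₁ ⊗ₖ S₀) = D
    rw [Matrix.mul_add, Matrix.add_mul, ← Matrix.mul_kronecker_mul, ← Matrix.mul_kronecker_mul,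
      ← Matrix.mul_kronecker_mul, ← Matrix.mul_kronecker_mul, hL₁, hM₀, hM₁, hL₀]
  constructor
  · -- A * B = 1
    have h1 : A * T = (T.transpose)⁻¹ * D := by
      have := congrArg (fun X => (T.transpose)⁻¹ * X) hkey
      simpa [Matrix.mul_assoc, Matrix.nonsing_inv_mul _ ((Matrix.det_transpose T) ▸ hdT),
        ← Matrix.mul_assoc] using this
    show A * (T * D⁻¹ * T.transpose) = 1
    rw [← Matrix.mul_assoc, ← Matrix.mul_assoc, h1, Matrix.mul_assoc ((T.transpose)⁻¹) D D⁻¹,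
      Matrix.mul_nonsing_inv _ hdD, Matrix.mul_one, Matrix.nonsing_inv_mul _
      ((Matrix.det_transpose T) ▸ hdT)]
  · -- B * A = 1
    have h2 : T.transpose * A = D * T⁻¹ := by
      have := congrArg (fun X => X * T⁻¹) hkey
      simpa [Matrix.mul_assoc, Matrix.mul_nonsing_inv _ hdT] using this
    show T * D⁻¹ * T.transpose * A = 1
    rw [Matrix.mul_assoc, h2, ← Matrix.mul_assoc, Matrix.mul_assoc T D⁻¹ D,
      Matrix.nonsing_inv_mul _ hdD, Matrix.mul_one, Matrix.mul_nonsing_inv _ hdT]
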